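/- The derivative of the adjusted replicator map g at x = 0 equals exp(β(Π_G − C_G − Π_B)); consequently 0 is a hyperbolically attracting fixed point (derivative strictly between 0 and 1) if and only if Π_B > Π_G − C_G. -/

import Mathlib

noncomputable def g13 (β PB PG CB CG x : ℝ) : ℝ :=
  x ^ 2 / (x + (1 - x) * Real.exp (β * (PB - PG - CB))) +
    x * (1 - x) / (x + (1 - x) * Real.exp (β * (PB - PG + CG)))

theorem stmt13 (β PB PG CB CG : ℝ) (hβ : 0 < β) (hCB : 0 ≤ CB) (hCG : 0 ≤ CG) :
    deriv (g13 β PB PG CB CG) 0 = Real.exp (β * (PG - CG - PB)) ∧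
      (deriv (g13 β PB PG CB CG) 0 ∈ Set.Ioo (0:ℝ) 1 ↔ PB > PG - CG) := by
  set a := Real.exp (β * (PB - PG - CB)) with ha
  set b := Real.exp (β * (PB - PG + CG)) with hb
  have hapos : 0 < a := Real.exp_pos _
  have hbpos : 0 < b := Real.exp_pos _
  have hd1 : HasDerivAt (fun x : ℝ => x + (1 - x) * a) (1 + (-1) * a) 0 := by
    have := ((hasDerivAt_id (0:ℝ)).add
      (((hasDerivAt_id (0:ℝ)).const_sub 1).mul_const a))
    simpa [Pi.add_def] using this
  have hd2 : HasDerivAt (fun x : ℝ => x + (1 - x) * b) (1 + (-1) * b) 0 := by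
    have := ((hasDerivAt_id (0:ℝ)).add
      (((hasDerivAt_id (0:ℝ)).const_sub 1).mul_const b))
    simpa [Pi.add_def] using this
  have hn1 : HasDerivAt (fun x : ℝ => x ^ 2) (0:ℝ) 0 := by
    have := hasDerivAt_pow 2 (0:ℝ)
    simpa using this
  have hn2 : HasDerivAt (fun x : ℝ => x * (1 - x)) (1:ℝ) 0 := by
    have := (hasDerivAt_id (0:ℝ)).mul ((hasDerivAt_id (0:ℝ)).const_sub 1)
    simpa [Pi.mul_def] using this
  have hden1 : (0:ℝ) + (1 - 0) * a ≠ 0 := by simp [hapos.ne']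
  have hden2 : (0:ℝ) + (1 - 0) * b ≠ 0 := by simp [hbpos.ne']
  have hq1 := hn1.div hd1 hden1
  have hq2 := hn2.div hd2 hden2
  have hsum := hq1.add hq2
  have hgder : HasDerivAt (g13 β PB PG CB CG) (1 / b) 0 := by
    have hval : (0 * ((0:ℝ) + (1 - 0) * a) - 0 ^ 2 * (1 + (-1) * a)) / ((0:ℝ) + (1 - 0) * a) ^ 2
        + (1 * ((0:ℝ) + (1 - 0) * b) - 0 * (1 - 0) * (1 + (-1) * b)) / ((0:ℝ) + (1 - 0) * b) ^ 2
        = 1 / b := by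
      field_simp
      ring
    have := hsum
    rw [hval] at this
    exact this
  have hder : deriv (g13 β PB PG CB CG) 0 = Real.exp (β * (PG - CG - PB)) := by
    rw [hgder.deriv, hb, one_div, ← Real.exp_neg]
    ring_nf
  refine ⟨hder, ?_⟩
  rw [hder]
  constructor
  · rintro ⟨-, h2⟩
    have := Real.exp_lt_one_iff.mp h2
    have : β * (PG - CG - PB) < 0 := this
    nlinarith
  · intro h
    refine ⟨Real.exp_pos _, Real.exp_lt_one_iff.mpr ?_⟩
    nlinarith
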